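/- (Proposition 2) Let A > 0, B > 0, D > 0 and suppose 0 < α < (4A³D)/(243B²). Then there exist τ_a and τ_b with 0 < τ_a < τ_b < A·α such that for every τ⁻¹ ∈ (τ_a, τ_b), the trace of the Jacobian J of the SRK system at the equilibrium is strictly positive, where J = [[−α·r₀, −τ⁻¹/(2r₀²)], [2D, (D/r₀³)(3τ⁻¹/α − 2A)]] with r₀ = √(B/(A − τ⁻¹/α)). -/
import Mathlib


/-- Proposition 2: if `0 < α < 4A³D/(243B²)`, there is a nonempty open interval
`(τ_a, τ_b) ⊂ (0, Aα)` on which the trace of the SRK Jacobian at the equilibrium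
is strictly positive. -/
theorem srk_positive_trace_interval (A B α D : ℝ) (hA : 0 < A) (hB : 0 < B)
    (hD : 0 < D) (hα0 : 0 < α) (hα : α < 4 * A ^ 3 * D / (243 * B ^ 2)) :
    ∃ τa τb : ℝ, 0 < τa ∧ τa < τb ∧ τb < A * α ∧
      ∀ τinv ∈ Set.Ioo τa τb,
        ∀ (r0 : ℝ) (J : Matrix (Fin 2) (Fin 2) ℝ),
          r0 = Real.sqrt (B / (A - τinv / α)) →
          J = !![-(α * r0), -(τinv / (2 * r0 ^ 2));
                 2 * D, (D / r0 ^ 3) * (3 * τinv / α - 2 * A)] →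
          0 < J.trace := by
  set g : ℝ → ℝ := fun τ => D * (3 * τ / α - 2 * A) * (A - τ / α) ^ 2 - α * B ^ 2 with hg
  have hgc : Continuous g := by fun_prop
  set τ0 : ℝ := 7 * A * α / 9 with hτ0
  have hg0 : 0 < g τ0 := by
    have h1 : α * (243 * B ^ 2) < 4 * A ^ 3 * D := by
      have := (lt_div_iff₀ (by positivity : (0:ℝ) < 243 * B ^ 2)).mp hα
      linarith
    have h2 : g τ0 = (4 * A ^ 3 * D - α * (243 * B ^ 2)) / 243 := by
      simp only [hg, hτ0]
      field_simp
      ring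
    rw [h2]
    exact div_pos (by linarith) (by norm_num)
  have hU : IsOpen {τ : ℝ | 0 < g τ} := isOpen_lt continuous_const hgc
  obtain ⟨δ, hδ0, hδ⟩ := Metric.isOpen_iff.mp hU τ0 hg0
  refine ⟨max (τ0 - δ / 2) (2 * A * α / 3), min (τ0 + δ / 2) (8 * A * α / 9), ?_, ?_, ?_, ?_⟩
  · exact lt_max_of_lt_right (by positivity)
  · apply max_lt <;> apply lt_min <;> linarith [mul_pos hA hα0, hδ0, hτ0]
  · have : 8 * A * α / 9 < A * α := by nlinarith [mul_pos hA hα0]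
    exact lt_of_le_of_lt (min_le_right _ _) this
  · rintro τinv ⟨h1, h2⟩ r0 J hr0 hJ
    have ha1 : τ0 - δ / 2 < τinv := lt_of_le_of_lt (le_max_left _ _) h1
    have ha2 : 2 * A * α / 3 < τinv := lt_of_le_of_lt (le_max_right _ _) h1
    have hb1 : τinv < τ0 + δ / 2 := lt_of_lt_of_le h2 (min_le_left _ _)
    have hb2 : τinv < 8 * A * α / 9 := lt_of_lt_of_le h2 (min_le_right _ _)
    have hgτ : 0 < g τinv := by
      apply hδ
      rw [Metric.mem_ball, Real.dist_eq, abs_lt]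
      constructor <;> linarith
    -- basic facts
    have hs : 0 < A - τinv / α := by
      rw [sub_pos, div_lt_iff₀ hα0]
      nlinarith [mul_pos hA hα0]
    have hm : 0 < 3 * τinv / α - 2 * A := by
      rw [sub_pos, lt_div_iff₀ hα0]
      nlinarith [mul_pos hA hα0]
    have hr0pos : 0 < r0 := by
      rw [hr0, Real.sqrt_pos]
      positivity
    have hr0sq : r0 ^ 2 = B / (A - τinv / α) := by
      rw [hr0, Real.sq_sqrt (by positivity)]
    have hr0sq' : r0 ^ 2 * (A - τinv / α) = B := by
      rw [hr0sq, div_mul_cancel₀ _ (ne_of_gt hs)]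
    have htr : J.trace = -(α * r0) + (D / r0 ^ 3) * (3 * τinv / α - 2 * A) := by
      rw [hJ, Matrix.trace_fin_two]
      simp
    rw [htr]
    have key : α * r0 ^ 4 < D * (3 * τinv / α - 2 * A) := by
      have hgτ' : α * B ^ 2 < D * (3 * τinv / α - 2 * A) * (A - τinv / α) ^ 2 := by
        simpa [hg, sub_pos] using hgτ
      have hB2 : α * B ^ 2 = α * r0 ^ 4 * (A - τinv / α) ^ 2 := by
        rw [← hr0sq']; ring
      have h4 : α * r0 ^ 4 * (A - τinv / α) ^ 2 <
          D * (3 * τinv / α - 2 * A) * (A - τinv / α) ^ 2 := by linarith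
      exact lt_of_mul_lt_mul_right h4 (by positivity)
    have h3 : α * r0 < (D / r0 ^ 3) * (3 * τinv / α - 2 * A) := by
      rw [div_mul_eq_mul_div, lt_div_iff₀ (pow_pos hr0pos 3)]
      calc α * r0 * r0 ^ 3 = α * r0 ^ 4 := by ring
        _ < D * (3 * τinv / α - 2 * A) := key
    linarith
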